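/- Consider Discounted HEDGE with K ≥ 1 experts, β ∈ (0,1], γ ∈ (0,1], initial weights w_k[1] = W > 0 for all k, losses l^{(k)}[n] ∈ [0,1], weight recurrence w_k[n+1] = (w_k[n])^{γ} · β^{l^{(k)}[n]}, probabilities p^{(k)}[n] = (w_k[n])^{γ} / Σ_{j=1}^{K} (w_j[n])^{γ}, and predictor loss L_N(γ) = Σ_{n=1}^{N} γ^{N−n} Σ_{k=1}^{K} p^{(k)}[n] l^{(k)}[n]. Assume the anti-monotonicity condition: for every time n and all experts j, k, if w_j[n] ≤ w_k[n] then l^{(j)}[n] ≥ l^{(k)}[n]. Then for every N ≥ 1, Σ_{k=1}^{K} w_k[N+1] ≤ K · W^{γ^N} · exp(−(1−β) · L_N(γ)). -/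

import Mathlib

theorem dh_cheb_aux (S : Finset ℕ) (u b l : ℕ → ℝ) (hu : ∀ i ∈ S, 0 ≤ u i)
    (hab : ∀ i ∈ S, ∀ j ∈ S, (b i - b j) * (l i - l j) ≤ 0) :
    (∑ i ∈ S, u i) * (∑ i ∈ S, u i * b i * l i) ≤
      (∑ i ∈ S, u i * b i) * (∑ i ∈ S, u i * l i) := by
  set F : ℕ → ℕ → ℝ := fun i j => u i * b i * (u j * l j) - u i * (u j * b j * l j) with hF
  have key : (∑ i ∈ S, u i * b i) * (∑ i ∈ S, u i * l i) -
      (∑ i ∈ S, u i) * (∑ i ∈ S, u i * b i * l i) = ∑ i ∈ S, ∑ j ∈ S, F i j := by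
    rw [Finset.sum_mul_sum, Finset.sum_mul_sum, ← Finset.sum_sub_distrib]
    exact Finset.sum_congr rfl fun i _ => by rw [← Finset.sum_sub_distrib]
  have hnn : (0:ℝ) ≤ ∑ i ∈ S, ∑ j ∈ S, F i j := by
    have hcomm : (∑ i ∈ S, ∑ j ∈ S, F j i) = ∑ i ∈ S, ∑ j ∈ S, F i j :=
      Finset.sum_comm
    have h2 : (∑ i ∈ S, ∑ j ∈ S, F i j) + (∑ i ∈ S, ∑ j ∈ S, F j i)
        = ∑ i ∈ S, ∑ j ∈ S, (F i j + F j i) := by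
      rw [← Finset.sum_add_distrib]
      exact Finset.sum_congr rfl fun i _ => by rw [← Finset.sum_add_distrib]
    have h3 : (0:ℝ) ≤ ∑ i ∈ S, ∑ j ∈ S, (F i j + F j i) := by
      apply Finset.sum_nonneg; intro i hi
      apply Finset.sum_nonneg; intro j hj
      have heq : F i j + F j i = u i * u j * (-((b i - b j) * (l i - l j))) := by
        simp only [hF]; ring
      rw [heq]
      exact mul_nonneg (mul_nonneg (hu i hi) (hu j hj))
        (neg_nonneg.2 (hab i hi j hj))
    linarith [hcomm, h2, h3]
  linarith

/-- telescoped total-weight upper bound for Discounted HEDGE under the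
anti-monotonicity condition (smaller-weight experts incur larger instantaneous losses):
`∑_k w k (N+1) ≤ K * W^(γ^N) * exp(-(1-β) * L_N(γ))` where
`L_N(γ) = ∑_{n=1}^N γ^(N-n) ∑_k p k n * l k n`. -/
theorem discounted_hedge_total_weight_upper_bound
    (K : ℕ) (hK : 1 ≤ K) (β γ W : ℝ)
    (hβ : β ∈ Set.Ioc (0 : ℝ) 1) (hγ : γ ∈ Set.Ioc (0 : ℝ) 1) (hW : 0 < W)
    (w l : ℕ → ℕ → ℝ)
    (hl : ∀ k ∈ Finset.Icc 1 K, ∀ n, 1 ≤ n → l k n ∈ Set.Icc (0 : ℝ) 1)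
    (hw1 : ∀ k ∈ Finset.Icc 1 K, w k 1 = W)
    (hrec : ∀ k ∈ Finset.Icc 1 K, ∀ n, 1 ≤ n →
      w k (n + 1) = (w k n) ^ γ * β ^ (l k n))
    (hanti : ∀ n, 1 ≤ n → ∀ j ∈ Finset.Icc 1 K, ∀ k ∈ Finset.Icc 1 K,
      w j n ≤ w k n → l k n ≤ l j n)
    (N : ℕ) (hN : 1 ≤ N) :
    ∑ k ∈ Finset.Icc 1 K, w k (N + 1) ≤
      (K : ℝ) * W ^ (γ ^ N) *
        Real.exp (-(1 - β) *
          ∑ n ∈ Finset.Icc 1 N, γ ^ (N - n) *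
            ∑ k ∈ Finset.Icc 1 K,
              ((w k n) ^ γ / ∑ j ∈ Finset.Icc 1 K, (w j n) ^ γ) * l k n) := by
  obtain ⟨hβ0, hβ1⟩ := hβ
  obtain ⟨hγ0, hγ1⟩ := hγ
  -- positivity of weights
  have hwpos : ∀ n, 1 ≤ n → ∀ k ∈ Finset.Icc 1 K, 0 < w k n := by
    intro n
    induction n with
    | zero => omega
    | succ m ih =>
      intro _ k hk
      by_cases hm : m = 0
      · subst hm; rw [hw1 k hk]; exact hW
      · have h1m : 1 ≤ m := Nat.one_le_iff_ne_zero.2 hm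
        rw [hrec k hk m h1m]
        exact mul_pos (Real.rpow_pos_of_pos (ih h1m k hk) γ)
          (Real.rpow_pos_of_pos hβ0 _)
  -- Bernoulli-type bound via weighted AM-GM
  have hbern : ∀ x : ℝ, 0 ≤ x → x ≤ 1 → β ^ x ≤ 1 - (1 - β) * x := by
    intro x hx0 hx1
    have h := Real.geom_mean_le_arith_mean2_weighted hx0 (by linarith : (0:ℝ) ≤ 1 - x)
      hβ0.le zero_le_one (by ring)
    rw [Real.one_rpow, mul_one] at h
    linarith
  -- per-step bound
  have step : ∀ n, 1 ≤ n → n ≤ N →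
      ∑ k ∈ Finset.Icc 1 K, (w k (n + 1)) ^ ((γ : ℝ) ^ (N - n)) ≤
        (∑ k ∈ Finset.Icc 1 K, (w k n) ^ (γ * γ ^ (N - n))) *
          Real.exp (-(1 - β) * (γ ^ (N - n) *
            ∑ k ∈ Finset.Icc 1 K,
              ((w k n) ^ γ / ∑ j ∈ Finset.Icc 1 K, (w j n) ^ γ) * l k n)) := by
    intro n hn hnN
    set c : ℝ := (γ : ℝ) ^ (N - n) with hcdef
    have hc0 : 0 < c := pow_pos hγ0 _
    have hc1 : c ≤ 1 := pow_le_one₀ hγ0.le hγ1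
    set S : ℝ := ∑ j ∈ Finset.Icc 1 K, (w j n) ^ γ with hSdef
    have hne : (Finset.Icc 1 K).Nonempty := ⟨1, by simp [Finset.mem_Icc]; omega⟩
    have hSpos : 0 < S :=
      Finset.sum_pos (fun j hj => Real.rpow_pos_of_pos (hwpos n hn j hj) γ) hne
    set T : ℝ := ∑ k ∈ Finset.Icc 1 K, (w k n) ^ (γ * c) with hTdef
    have hTpos : 0 < T :=
      Finset.sum_pos (fun j hj => Real.rpow_pos_of_pos (hwpos n hn j hj) _) hne
    set P : ℝ := ∑ k ∈ Finset.Icc 1 K, ((w k n) ^ γ / S) * l k n with hPdef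
    -- pointwise
    have hpt : ∀ k ∈ Finset.Icc 1 K,
        (w k (n + 1)) ^ c ≤ (w k n) ^ (γ * c) * (1 - (1 - β) * (c * l k n)) := by
      intro k hk
      have hwk := hwpos n hn k hk
      have hl0 := (hl k hk n hn).1
      have hl1 := (hl k hk n hn).2
      rw [hrec k hk n hn,
        Real.mul_rpow (Real.rpow_nonneg hwk.le γ) (Real.rpow_nonneg hβ0.le _),
        ← Real.rpow_mul hwk.le, ← Real.rpow_mul hβ0.le]
      apply mul_le_mul_of_nonneg_left _ (Real.rpow_nonneg hwk.le _)
      have hx0 : 0 ≤ l k n * c := mul_nonneg hl0 hc0.le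
      have hx1 : l k n * c ≤ 1 := by nlinarith
      have h := hbern _ hx0 hx1
      calc β ^ (l k n * c) ≤ 1 - (1 - β) * (l k n * c) := h
        _ = 1 - (1 - β) * (c * l k n) := by ring
    have hsum1 : ∑ k ∈ Finset.Icc 1 K, (w k (n + 1)) ^ c ≤
        T - (1 - β) * c * ∑ k ∈ Finset.Icc 1 K, (w k n) ^ (γ * c) * l k n := by
      calc ∑ k ∈ Finset.Icc 1 K, (w k (n + 1)) ^ c
          ≤ ∑ k ∈ Finset.Icc 1 K, (w k n) ^ (γ * c) * (1 - (1 - β) * (c * l k n)) :=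
            Finset.sum_le_sum hpt
        _ = T - (1 - β) * c * ∑ k ∈ Finset.Icc 1 K, (w k n) ^ (γ * c) * l k n := by
            rw [hTdef, Finset.mul_sum, ← Finset.sum_sub_distrib]
            exact Finset.sum_congr rfl fun k _ => by ring
    -- Chebyshev / majorization
    have hcheb : T * (∑ k ∈ Finset.Icc 1 K, (w k n) ^ γ * l k n) ≤
        S * (∑ k ∈ Finset.Icc 1 K, (w k n) ^ (γ * c) * l k n) := by
      have hab : ∀ i ∈ Finset.Icc 1 K, ∀ j ∈ Finset.Icc 1 K,
          ((w i n) ^ (γ - γ * c) - (w j n) ^ (γ - γ * c)) * (l i n - l j n) ≤ 0 := by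
        intro i hi j hj
        have hexp : (0:ℝ) ≤ γ - γ * c := by nlinarith
        rcases le_total (w i n) (w j n) with h | h
        · have hb : (w i n) ^ (γ - γ * c) ≤ (w j n) ^ (γ - γ * c) :=
            Real.rpow_le_rpow (hwpos n hn i hi).le h hexp
          have hll : l j n ≤ l i n := hanti n hn i hi j hj h
          nlinarith
        · have hb : (w j n) ^ (γ - γ * c) ≤ (w i n) ^ (γ - γ * c) :=
            Real.rpow_le_rpow (hwpos n hn j hj).le h hexp
          have hll : l i n ≤ l j n := hanti n hn j hj i hi h
          nlinarith
      have h := dh_cheb_aux (Finset.Icc 1 K) (fun k => (w k n) ^ (γ * c))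
        (fun k => (w k n) ^ (γ - γ * c)) (fun k => l k n)
        (fun i hi => (Real.rpow_pos_of_pos (hwpos n hn i hi) _).le) hab
      have hub : ∀ k ∈ Finset.Icc 1 K,
          (w k n) ^ (γ * c) * (w k n) ^ (γ - γ * c) = (w k n) ^ γ := by
        intro k hk
        rw [← Real.rpow_add (hwpos n hn k hk)]
        norm_num
      calc T * (∑ k ∈ Finset.Icc 1 K, (w k n) ^ γ * l k n)
          = (∑ k ∈ Finset.Icc 1 K, (w k n) ^ (γ * c)) *
            (∑ k ∈ Finset.Icc 1 K,
              (w k n) ^ (γ * c) * (w k n) ^ (γ - γ * c) * l k n) := by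
            rw [hTdef]
            congr 1
            exact Finset.sum_congr rfl fun k hk => by rw [hub k hk]
        _ ≤ (∑ k ∈ Finset.Icc 1 K, (w k n) ^ (γ * c) * (w k n) ^ (γ - γ * c)) *
            (∑ k ∈ Finset.Icc 1 K, (w k n) ^ (γ * c) * l k n) := h
        _ = S * (∑ k ∈ Finset.Icc 1 K, (w k n) ^ (γ * c) * l k n) := by
            rw [hSdef]
            congr 1
            exact Finset.sum_congr rfl fun k hk => hub k hk
    have hSP : S * P = ∑ k ∈ Finset.Icc 1 K, (w k n) ^ γ * l k n := by
      rw [hPdef, Finset.mul_sum]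
      exact Finset.sum_congr rfl fun k _ => by
        field_simp
    have hPle : T * P ≤ ∑ k ∈ Finset.Icc 1 K, (w k n) ^ (γ * c) * l k n := by
      rw [← hSP] at hcheb
      have h2 : S * (T * P) ≤ S * (∑ k ∈ Finset.Icc 1 K, (w k n) ^ (γ * c) * l k n) := by
        nlinarith [hcheb]
      exact le_of_mul_le_mul_left h2 hSpos
    have hβc : 0 ≤ (1 - β) * c := mul_nonneg (by linarith) hc0.le
    calc ∑ k ∈ Finset.Icc 1 K, (w k (n + 1)) ^ c
        ≤ T - (1 - β) * c * ∑ k ∈ Finset.Icc 1 K, (w k n) ^ (γ * c) * l k n := hsum1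
      _ ≤ T - (1 - β) * c * (T * P) := by nlinarith [hPle]
      _ = T * (1 - (1 - β) * (c * P)) := by ring
      _ ≤ T * Real.exp (-((1 - β) * (c * P))) := by
          apply mul_le_mul_of_nonneg_left _ hTpos.le
          have h := Real.add_one_le_exp (-((1 - β) * (c * P)))
          linarith
      _ = T * Real.exp (-(1 - β) * (c * P)) := by rw [neg_mul]
  -- main induction
  have main : ∀ n, 1 ≤ n → n ≤ N →
      ∑ k ∈ Finset.Icc 1 K, (w k (n + 1)) ^ ((γ : ℝ) ^ (N - n)) ≤
        (K : ℝ) * W ^ (γ ^ N) *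
          Real.exp (-(1 - β) *
            ∑ m ∈ Finset.Icc 1 n, γ ^ (N - m) *
              ∑ k ∈ Finset.Icc 1 K,
                ((w k m) ^ γ / ∑ j ∈ Finset.Icc 1 K, (w j m) ^ γ) * l k m) := by
    intro n hn
    induction n, hn using Nat.le_induction with
    | base =>
      intro _
      have h := step 1 le_rfl hN
      have hexp : γ * γ ^ (N - 1) = γ ^ N := by
        rw [mul_comm, ← pow_succ]
        congr 1
        omega
      have hbr : ∑ k ∈ Finset.Icc 1 K, (w k 1) ^ (γ * γ ^ (N - 1)) =
          (K : ℝ) * W ^ (γ ^ N) := by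
        rw [Finset.sum_congr rfl fun k hk => by rw [hw1 k hk, hexp]]
        rw [Finset.sum_const, Nat.card_Icc]
        simp
      rw [hbr] at h
      refine h.trans_eq ?_
      congr 1
      rw [Finset.Icc_self, Finset.sum_singleton]
    | succ n hn ih =>
      intro hsN
      have hnN : n ≤ N := by omega
      have hA := ih hnN
      have hstep := step (n + 1) (by omega) hsN
      have hexp : γ * γ ^ (N - (n + 1)) = γ ^ (N - n) := by
        rw [mul_comm, ← pow_succ]
        congr 1
        omega
      rw [hexp] at hstep
      have hexppos : (0:ℝ) ≤ Real.exp (-(1 - β) * (γ ^ (N - (n + 1)) *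
          ∑ k ∈ Finset.Icc 1 K,
            ((w k (n + 1)) ^ γ / ∑ j ∈ Finset.Icc 1 K, (w j (n + 1)) ^ γ) * l k (n + 1))) :=
        (Real.exp_pos _).le
      calc ∑ k ∈ Finset.Icc 1 K, (w k (n + 1 + 1)) ^ ((γ : ℝ) ^ (N - (n + 1)))
          ≤ (∑ k ∈ Finset.Icc 1 K, (w k (n + 1)) ^ ((γ : ℝ) ^ (N - n))) *
            Real.exp (-(1 - β) * (γ ^ (N - (n + 1)) *
              ∑ k ∈ Finset.Icc 1 K,
                ((w k (n + 1)) ^ γ / ∑ j ∈ Finset.Icc 1 K, (w j (n + 1)) ^ γ) *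
                  l k (n + 1))) := hstep
        _ ≤ ((K : ℝ) * W ^ (γ ^ N) *
              Real.exp (-(1 - β) *
                ∑ m ∈ Finset.Icc 1 n, γ ^ (N - m) *
                  ∑ k ∈ Finset.Icc 1 K,
                    ((w k m) ^ γ / ∑ j ∈ Finset.Icc 1 K, (w j m) ^ γ) * l k m)) *
            Real.exp (-(1 - β) * (γ ^ (N - (n + 1)) *
              ∑ k ∈ Finset.Icc 1 K,
                ((w k (n + 1)) ^ γ / ∑ j ∈ Finset.Icc 1 K, (w j (n + 1)) ^ γ) *
                  l k (n + 1))) := mul_le_mul_of_nonneg_right hA hexppos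
        _ = (K : ℝ) * W ^ (γ ^ N) *
              Real.exp (-(1 - β) *
                ∑ m ∈ Finset.Icc 1 (n + 1), γ ^ (N - m) *
                  ∑ k ∈ Finset.Icc 1 K,
                    ((w k m) ^ γ / ∑ j ∈ Finset.Icc 1 K, (w j m) ^ γ) * l k m) := by
            rw [mul_assoc, ← Real.exp_add, Finset.sum_Icc_succ_top (by omega : 1 ≤ n + 1)]
            congr 2
            ring
  have h := main N hN le_rfl
  simpa using h
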